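/- Let Ω ⊆ 𝔽ⁿ be a finitely generated P-closed set and let {F₁,…,F_M} be a dual P-basis of a P-basis of Ω. Then F₁,…,F_M are left linearly independent over 𝔽, their images under the canonical projection R → R/I(Ω) form a left 𝔽-basis of the quotient left 𝔽-vector space R/I(Ω), and hence dim_𝔽(R/I(Ω)) = Rk(Ω). In particular, if 𝔽ⁿ is finitely generated as a P-closed set, then the minimal skew polynomial ring R/I(𝔽ⁿ) is a left 𝔽-vector space of finite dimension Rk(𝔽ⁿ). -/

import Mathlib

/- Common setup: free multivariate skew polynomial rings over a division ring. -/

open Matrix Finsupp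

/-- The underlying left `𝔽`-module of the free multivariate skew polynomial ring:
the free left `𝔽`-module with basis the free monoid on `n` symbols. -/
abbrev SkewPoly (𝔽 : Type*) [DivisionRing 𝔽] (n : ℕ) : Type _ := FreeMonoid (Fin n) →₀ 𝔽

namespace SkewPoly

variable {𝔽 : Type*} [DivisionRing 𝔽] {n : ℕ}

/-- The variable `xᵢ` as a skew polynomial. -/
noncomputable def X (𝔽 : Type*) [DivisionRing 𝔽] {n : ℕ} (i : Fin n) : SkewPoly 𝔽 n :=
  Finsupp.single (FreeMonoid.of i) 1

/-- The constant `a` as a skew polynomial (coefficient on the empty word). -/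
noncomputable def C {𝔽 : Type*} [DivisionRing 𝔽] (n : ℕ) (a : 𝔽) :
    SkewPoly 𝔽 n := Finsupp.single 1 a

/-- The degree of a skew polynomial: the maximal length of a word in its support
(`⊥` for the zero polynomial). -/
noncomputable def deg (F : SkewPoly 𝔽 n) : WithBot ℕ :=
  F.support.sup fun m => ((FreeMonoid.length m : ℕ) : WithBot ℕ)

/-- A matrix morphism `σ : 𝔽 → Mₙ(𝔽)`: a unital ring homomorphism. -/
def IsMatrixMorphism (σ : 𝔽 → Matrix (Fin n) (Fin n) 𝔽) : Prop :=
  σ 1 = 1 ∧ (∀ a b : 𝔽, σ (a + b) = σ a + σ b) ∧ (∀ a b : 𝔽, σ (a * b) = σ a * σ b)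

/-- A `σ`-vector derivation `δ : 𝔽 → 𝔽ⁿ`: additive with `δ(ab) = σ(a)δ(b) + δ(a)b`. -/
def IsVectorDerivation (σ : 𝔽 → Matrix (Fin n) (Fin n) 𝔽) (δ : 𝔽 → Fin n → 𝔽) : Prop :=
  (∀ a b : 𝔽, δ (a + b) = δ a + δ b) ∧
    (∀ a b : 𝔽, δ (a * b) = σ a *ᵥ δ b + fun i => δ a i * b)

/-- A multiplication on the free module `SkewPoly 𝔽 n` making it a ring (with the
existing addition) whose identity is the empty word, which restricts to concatenation
on monomials, is additive on degrees of nonzero elements, and for which left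
multiplication by constants is scalar multiplication. -/
structure RawMul (𝔽 : Type*) [DivisionRing 𝔽] (n : ℕ) where
  /-- the multiplication -/
  mul : SkewPoly 𝔽 n → SkewPoly 𝔽 n → SkewPoly 𝔽 n
  mul_add : ∀ F G H : SkewPoly 𝔽 n, mul F (G + H) = mul F G + mul F H
  add_mul : ∀ F G H : SkewPoly 𝔽 n, mul (F + G) H = mul F H + mul G H
  mul_assoc : ∀ F G H : SkewPoly 𝔽 n, mul (mul F G) H = mul F (mul G H)
  one_mul : ∀ F : SkewPoly 𝔽 n, mul (C n 1) F = F
  mul_one : ∀ F : SkewPoly 𝔽 n, mul F (C n 1) = F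
  mono_mul_mono : ∀ m m' : FreeMonoid (Fin n),
    mul (Finsupp.single m 1) (Finsupp.single m' 1) = Finsupp.single (m * m') 1
  const_mul : ∀ (a : 𝔽) (F : SkewPoly 𝔽 n), mul (C n a) F = a • F
  deg_mul : ∀ F G : SkewPoly 𝔽 n, F ≠ 0 → G ≠ 0 → deg (mul F G) = deg F + deg G

/-- The multiplication `S` satisfies the commutation rule
`xᵢ a = Σⱼ σ_{i,j}(a) xⱼ + δᵢ(a)`. -/
def HasCommRule (S : RawMul 𝔽 n) (σ : 𝔽 → Matrix (Fin n) (Fin n) 𝔽)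
    (δ : 𝔽 → Fin n → 𝔽) : Prop :=
  ∀ (i : Fin n) (a : 𝔽),
    S.mul (X 𝔽 i) (C n a) =
      (∑ j : Fin n, Finsupp.single (FreeMonoid.of j) (σ a i j)) + C n (δ a i)

/-- `F = Σᵢ Gᵢ (xᵢ - aᵢ) + b`, i.e. `b` is a remainder of `F` upon right division
by `x₁ - a₁, …, xₙ - aₙ`; equivalently `F - b` lies in the left ideal generated by
the `xᵢ - aᵢ`. -/
def Decomposes (S : RawMul 𝔽 n) (a : Fin n → 𝔽) (F : SkewPoly 𝔽 n) (b : 𝔽) : Prop :=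
  ∃ G : Fin n → SkewPoly 𝔽 n,
    F = (∑ i : Fin n, S.mul (G i) (X 𝔽 i - C n (a i))) + C n b

/-- The evaluation of `F` at the point `a`: the unique `b ∈ 𝔽` such that `F - b`
lies in the left ideal generated by `x₁ - a₁, …, xₙ - aₙ`. -/
noncomputable def eval (S : RawMul 𝔽 n) (a : Fin n → 𝔽) (F : SkewPoly 𝔽 n) : 𝔽 :=
  letI := Classical.propDecidable (∃ b : 𝔽, Decomposes S a F b)
  if h : ∃ b : 𝔽, Decomposes S a F b then h.choose else 0

/-- The `(σ,δ)`-conjugate `a^c = σ(c) a c⁻¹ + δ(c) c⁻¹` of `a` with respect to `c`. -/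
noncomputable def conj (σ : 𝔽 → Matrix (Fin n) (Fin n) 𝔽) (δ : 𝔽 → Fin n → 𝔽)
    (a : Fin n → 𝔽) (c : 𝔽) : Fin n → 𝔽 :=
  fun i => (σ c *ᵥ a) i * c⁻¹ + δ c i * c⁻¹

/-- `I(Ω)`: the set of skew polynomials vanishing at every point of `Ω`. -/
def zeroIdeal (S : RawMul 𝔽 n) (Ω : Set (Fin n → 𝔽)) : Set (SkewPoly 𝔽 n) :=
  {F | ∀ a ∈ Ω, eval S a F = 0}

/-- The left ideal of `SkewPoly 𝔽 n` generated by `x₁ - a₁, …, xₙ - aₙ`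
(the set of sums of left multiples of the generators). -/
def pointIdeal (S : RawMul 𝔽 n) (a : Fin n → 𝔽) : Set (SkewPoly 𝔽 n) :=
  {F | ∃ G : Fin n → SkewPoly 𝔽 n, F = ∑ i : Fin n, S.mul (G i) (X 𝔽 i - C n (a i))}

/-- The P-closure `Ω̄ = Z(I(Ω))` of a set of points `Ω`. -/
def pClosure (S : RawMul 𝔽 n) (Ω : Set (Fin n → 𝔽)) : Set (Fin n → 𝔽) :=
  {a | ∀ F ∈ zeroIdeal S Ω, eval S a F = 0}

/-- `Ω` is P-closed if it equals its P-closure. -/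
def IsPClosed (S : RawMul 𝔽 n) (Ω : Set (Fin n → 𝔽)) : Prop := pClosure S Ω = Ω

/-- `B` is P-independent: no point of `B` lies in the P-closure of the rest. -/
def PIndep (S : RawMul 𝔽 n) (B : Set (Fin n → 𝔽)) : Prop :=
  ∀ a ∈ B, a ∉ pClosure S (B \ {a})

/-- `B` is a P-basis of `Ω`: a P-independent subset of `Ω` whose P-closure is `Ω`. -/
def IsPBasis (S : RawMul 𝔽 n) (B Ω : Set (Fin n → 𝔽)) : Prop :=
  B ⊆ Ω ∧ PIndep S B ∧ pClosure S B = Ω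

/-- `Ω` is finitely generated: it is the P-closure of a finite subset of itself. -/
def FinGen (S : RawMul 𝔽 n) (Ω : Set (Fin n → 𝔽)) : Prop :=
  ∃ G : Set (Fin n → 𝔽), G.Finite ∧ G ⊆ Ω ∧ pClosure S G = Ω

/-- The rank of a P-closed set: the (common) cardinality of its P-bases. -/
noncomputable def pRank (S : RawMul 𝔽 n) (Ω : Set (Fin n → 𝔽)) : ℕ :=
  sInf {k : ℕ | ∃ B : Finset (Fin n → 𝔽), IsPBasis S ↑B Ω ∧ B.card = k}

/-- The image of the evaluation map `E_Ω : R → 𝔽^Ω`, as a left `𝔽`-subspace of `𝔽^Ω`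
(the span of the image; the image is itself a subspace since evaluation is left linear). -/
noncomputable def evalSpan (S : RawMul 𝔽 n) (Ω : Set (Fin n → 𝔽)) :
    Submodule 𝔽 (↥Ω → 𝔽) :=
  Submodule.span 𝔽 (Set.range fun F : SkewPoly 𝔽 n => fun a : ↥Ω => eval S ↑a F)

/-- `I` is a two-sided ideal with respect to the multiplication `S`. -/
def IsTwoSidedIdealSet (S : RawMul 𝔽 n) (I : Set (SkewPoly 𝔽 n)) : Prop :=
  (0 : SkewPoly 𝔽 n) ∈ I ∧ (∀ F ∈ I, ∀ G ∈ I, F + G ∈ I) ∧ (∀ F ∈ I, -F ∈ I) ∧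
    (∀ F ∈ I, ∀ G : SkewPoly 𝔽 n, S.mul G F ∈ I) ∧
    (∀ F ∈ I, ∀ G : SkewPoly 𝔽 n, S.mul F G ∈ I)


/-- The left row-rank of the skew Vandermonde matrix `V_d(G)`: the dimension of the
left `𝔽`-span of its rows `(N_m(c))_{c ∈ G}`, indexed by the words `m` of length `< d`,
where `N_m(c)` is the evaluation of the monomial `m` at the point `c`. -/
noncomputable def vandermondeRank (S : RawMul 𝔽 n) (G : Finset (Fin n → 𝔽)) (d : ℕ) :
    Cardinal :=
  Module.rank 𝔽 ↥(Submodule.span 𝔽 (Set.range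
    fun m : {m : FreeMonoid (Fin n) // FreeMonoid.length m < d} =>
      fun c : ↥G => eval S ↑c (Finsupp.single (m : FreeMonoid (Fin n)) (1 : 𝔽))))

end SkewPoly

open SkewPoly

namespace SkewPoly

variable {𝔽 : Type*} [DivisionRing 𝔽] {n : ℕ}

theorem zero_mul' (S : RawMul 𝔽 n) (F : SkewPoly 𝔽 n) : S.mul 0 F = 0 := by
  have h : S.mul 0 F + S.mul 0 F = S.mul 0 F := by
    rw [← S.add_mul]; norm_num
  exact add_eq_left.mp ((add_comm _ _).trans h)

theorem mul_zero' (S : RawMul 𝔽 n) (F : SkewPoly 𝔽 n) : S.mul F 0 = 0 := by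
  have h : S.mul F 0 + S.mul F 0 = S.mul F 0 := by
    rw [← S.mul_add]; norm_num
  exact add_eq_left.mp ((add_comm _ _).trans h)

theorem smul_mul' (S : RawMul 𝔽 n) (c : 𝔽) (F G : SkewPoly 𝔽 n) :
    S.mul (c • F) G = c • S.mul F G := by
  rw [← S.const_mul, ← S.const_mul, S.mul_assoc]

theorem mul_sub' (S : RawMul 𝔽 n) (F G H : SkewPoly 𝔽 n) :
    S.mul F (G - H) = S.mul F G - S.mul F H := by
  refine eq_sub_of_add_eq ?_
  rw [← S.mul_add, sub_add_cancel]

theorem sub_mul' (S : RawMul 𝔽 n) (F G H : SkewPoly 𝔽 n) :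
    S.mul (F - G) H = S.mul F H - S.mul G H := by
  refine eq_sub_of_add_eq ?_
  rw [← S.add_mul, sub_add_cancel]

theorem mul_sum' (S : RawMul 𝔽 n) {ι : Type*} (s : Finset ι) (F : SkewPoly 𝔽 n)
    (g : ι → SkewPoly 𝔽 n) : S.mul F (∑ i ∈ s, g i) = ∑ i ∈ s, S.mul F (g i) := by
  classical
  induction s using Finset.induction with
  | empty => simp [mul_zero']
  | insert _ _ hx ih => rw [Finset.sum_insert hx, Finset.sum_insert hx, S.mul_add, ih]

theorem sum_mul' (S : RawMul 𝔽 n) {ι : Type*} (s : Finset ι) (g : ι → SkewPoly 𝔽 n)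
    (F : SkewPoly 𝔽 n) : S.mul (∑ i ∈ s, g i) F = ∑ i ∈ s, S.mul (g i) F := by
  classical
  induction s using Finset.induction with
  | empty => simp [zero_mul']
  | insert _ _ hx ih => rw [Finset.sum_insert hx, Finset.sum_insert hx, S.add_mul, ih]

theorem C_add' (a b : 𝔽) : C n (a + b) = C n a + C n b := Finsupp.single_add _ _ _

theorem C_sub' (a b : 𝔽) : C n (a - b) = C n a - C n b := Finsupp.single_sub _ _ _

theorem C_zero' : C n (0 : 𝔽) = 0 := Finsupp.single_zero _

theorem smul_C' (c a : 𝔽) : c • C n a = C n (c * a) := Finsupp.smul_single' _ _ _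

theorem single_eq_smul_single (m : FreeMonoid (Fin n)) (c : 𝔽) :
    Finsupp.single m c = c • Finsupp.single m 1 := by
  rw [Finsupp.smul_single', mul_one]

theorem mul_X_eq_mapDomain (S : RawMul 𝔽 n) (i : Fin n) (F : SkewPoly 𝔽 n) :
    S.mul F (X 𝔽 i) = Finsupp.mapDomain (· * FreeMonoid.of i) F := by
  induction F using Finsupp.induction with
  | zero => simp [zero_mul']
  | single_add m c f hm hc ih =>
    rw [S.add_mul, ih, Finsupp.mapDomain_add, Finsupp.mapDomain_single,
      single_eq_smul_single m c, smul_mul', X, S.mono_mul_mono,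
      Finsupp.smul_single', mul_one]

theorem coeff_eq_zero_of_deg_lt {F : SkewPoly 𝔽 n} {m : FreeMonoid (Fin n)}
    (h : deg F < ((FreeMonoid.length m : ℕ) : WithBot ℕ)) : F m = 0 := by
  by_contra hc
  exact absurd (Finset.le_sup (f := fun m => ((FreeMonoid.length m : ℕ) : WithBot ℕ))
    (Finsupp.mem_support_iff.2 hc)) (not_le.2 h)

theorem deg_C_le (a : 𝔽) : deg (C n a) ≤ ((0 : ℕ) : WithBot ℕ) := by
  refine Finset.sup_le fun m hm => ?_
  have h1 : m = 1 := by
    have := Finsupp.support_single_subset hm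
    simpa using this
  simp [h1, FreeMonoid.length_one]

theorem deg_le_ndeg (F : SkewPoly 𝔽 n) :
    deg F ≤ ((F.support.sup fun m => FreeMonoid.length m : ℕ) : WithBot ℕ) :=
  Finset.sup_le fun m hm => WithBot.coe_le_coe.2 (Finset.le_sup hm)

end SkewPoly

namespace SkewPoly

variable {𝔽 : Type*} [DivisionRing 𝔽] {n : ℕ}

theorem const_eq_zero_of_sum (S : RawMul 𝔽 n) (a : Fin n → 𝔽) (G : Fin n → SkewPoly 𝔽 n)
    (c : 𝔽) (h : ∑ i : Fin n, S.mul (G i) (X 𝔽 i - C n (a i)) = C n c) : c = 0 := by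
  classical
  by_cases hG : ∀ i, G i = 0
  · simp only [hG, zero_mul', Finset.sum_const_zero] at h
    exact (Finsupp.single_eq_zero.mp h.symm)
  · exfalso
    push_neg at hG
    obtain ⟨i₁, hi₁⟩ := hG
    set s : Finset (Fin n) := Finset.univ.filter (fun i => G i ≠ 0) with hs
    have hsne : s.Nonempty := ⟨i₁, by simp [hs, hi₁]⟩
    set nd : SkewPoly 𝔽 n → ℕ := fun F => F.support.sup fun m => FreeMonoid.length m with hnd
    set d : ℕ := s.sup (fun i => nd (G i)) with hd
    obtain ⟨i₀, hi₀s, hi₀⟩ := Finset.exists_mem_eq_sup s hsne (fun i => nd (G i))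
    have hGi₀ : G i₀ ≠ 0 := by
      have := Finset.mem_filter.mp hi₀s; exact this.2
    obtain ⟨m₀, hm₀, hm₀len⟩ := Finset.exists_mem_eq_sup (G i₀).support
      (Finsupp.support_nonempty_iff.2 hGi₀) (fun m => FreeMonoid.length m)
    set m : FreeMonoid (Fin n) := m₀ * FreeMonoid.of i₀ with hm
    have hlenm : FreeMonoid.length m = d + 1 := by
      rw [hm, FreeMonoid.length_mul, FreeMonoid.length_of, hd, hi₀]
      show FreeMonoid.length m₀ + 1 = ((G i₀).support.sup fun m => FreeMonoid.length m) + 1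
      rw [hm₀len]
    -- Rearranged equation
    have h2 : ∑ i : Fin n, S.mul (G i) (X 𝔽 i) =
        C n c + ∑ i : Fin n, S.mul (G i) (C n (a i)) := by
      have h3 : ∀ i : Fin n, S.mul (G i) (X 𝔽 i - C n (a i)) =
          S.mul (G i) (X 𝔽 i) - S.mul (G i) (C n (a i)) := fun i => mul_sub' S _ _ _
      simp only [h3, Finset.sum_sub_distrib] at h
      rw [sub_eq_iff_eq_add] at h
      exact h
    have happ := congrArg (fun P : SkewPoly 𝔽 n => P m) h2
    simp only [Finsupp.finset_sum_apply, Finsupp.add_apply] at happ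
    -- RHS is zero
    have hCc : (C n c) m = 0 := by
      refine coeff_eq_zero_of_deg_lt ?_
      refine lt_of_le_of_lt (deg_C_le c) ?_
      rw [hlenm]
      exact_mod_cast WithBot.coe_lt_coe.2 (Nat.succ_pos d)
    have hBz : ∀ i : Fin n, (S.mul (G i) (C n (a i))) m = 0 := by
      intro i
      by_cases h1 : G i = 0
      · simp [h1, zero_mul']
      by_cases h2' : a i = 0
      · simp [h2', C_zero', mul_zero']
      refine coeff_eq_zero_of_deg_lt ?_
      have hCne : C n (a i) ≠ 0 := by
        simp [C, Finsupp.single_eq_zero, h2']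
      rw [S.deg_mul _ _ h1 hCne, hlenm]
      have hle1 : deg (G i) + deg (C n (a i)) ≤ deg (G i) + ((0:ℕ) : WithBot ℕ) :=
        add_le_add le_rfl (deg_C_le _)
      refine lt_of_le_of_lt hle1 ?_
      have hle2 : deg (G i) ≤ ((d : ℕ) : WithBot ℕ) := by
        refine le_trans (deg_le_ndeg _) ?_
        exact_mod_cast WithBot.coe_le_coe.2 (Finset.le_sup (f := fun i => nd (G i))
          (Finset.mem_filter.mpr ⟨Finset.mem_univ i, h1⟩))
      calc deg (G i) + ((0:ℕ) : WithBot ℕ) = deg (G i) := by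
            simp
        _ ≤ ((d : ℕ) : WithBot ℕ) := hle2
        _ < ((d+1 : ℕ) : WithBot ℕ) := by exact_mod_cast WithBot.coe_lt_coe.2 (Nat.lt_succ_self d)
    -- LHS
    have hA : ∀ i : Fin n, (S.mul (G i) (X 𝔽 i)) m
        = if i = i₀ then (G i₀) m₀ else 0 := by
      intro i
      rw [mul_X_eq_mapDomain]
      by_cases hii : i = i₀
      · subst hii
        rw [if_pos rfl, hm]
        exact Finsupp.mapDomain_apply (mul_left_injective _) _ _
      · rw [if_neg hii]
        refine Finsupp.mapDomain_notin_range _ _ ?_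
        rintro ⟨m', hm'⟩
        have hlist := congrArg FreeMonoid.toList hm'
        simp only [FreeMonoid.toList_mul] at hlist
        have h5 := (List.append_inj' hlist (by simp [FreeMonoid.toList_of])).2
        rw [FreeMonoid.toList_of, FreeMonoid.toList_of] at h5
        injection h5 with h6 _
        exact hii h6
    rw [Finset.sum_congr rfl (fun i _ => hA i), Finset.sum_ite_eq' Finset.univ i₀ _,
      if_pos (Finset.mem_univ i₀)] at happ
    rw [hCc, Finset.sum_congr rfl (fun i _ => hBz i)] at happ
    simp only [Finset.sum_const_zero, add_zero, zero_add] at happ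
    exact (Finsupp.mem_support_iff.mp hm₀) happ

end SkewPoly

namespace SkewPoly

variable {𝔽 : Type*} [DivisionRing 𝔽] {n : ℕ}

theorem decomposes_unique (S : RawMul 𝔽 n) {a : Fin n → 𝔽} {F : SkewPoly 𝔽 n} {b b' : 𝔽}
    (h : Decomposes S a F b) (h' : Decomposes S a F b') : b = b' := by
  obtain ⟨G, hG⟩ := h
  obtain ⟨G', hG'⟩ := h'
  have hthis := hG.symm.trans hG'
  have hkey : ∑ i : Fin n, S.mul (G i - G' i) (X 𝔽 i - C n (a i)) = C n (b' - b) := by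
    rw [C_sub']
    simp only [sub_mul', Finset.sum_sub_distrib]
    rw [sub_eq_sub_iff_add_eq_add, hthis, add_comm]
  have hz := const_eq_zero_of_sum S a _ _ hkey
  exact (sub_eq_zero.mp hz).symm

theorem decomposes_zero (S : RawMul 𝔽 n) (a : Fin n → 𝔽) : Decomposes S a 0 0 := by
  refine ⟨0, ?_⟩
  simp [zero_mul', C_zero']

theorem decomposes_add (S : RawMul 𝔽 n) {a : Fin n → 𝔽} {F F' : SkewPoly 𝔽 n} {b b' : 𝔽}
    (h : Decomposes S a F b) (h' : Decomposes S a F' b') :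
    Decomposes S a (F + F') (b + b') := by
  obtain ⟨G, hG⟩ := h
  obtain ⟨G', hG'⟩ := h'
  refine ⟨G + G', ?_⟩
  rw [hG, hG', C_add']
  simp only [Pi.add_apply, S.add_mul, Finset.sum_add_distrib]
  abel

theorem decomposes_smul (S : RawMul 𝔽 n) {a : Fin n → 𝔽} {F : SkewPoly 𝔽 n} {b : 𝔽} (c : 𝔽)
    (h : Decomposes S a F b) : Decomposes S a (c • F) (c * b) := by
  obtain ⟨G, hG⟩ := h
  refine ⟨fun i => c • G i, ?_⟩
  rw [hG, smul_add, Finset.smul_sum, ← smul_C']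
  simp only [smul_mul']

theorem decomposes_single {σ : 𝔽 → Matrix (Fin n) (Fin n) 𝔽} {δ : 𝔽 → Fin n → 𝔽}
    (S : RawMul 𝔽 n) (hS : HasCommRule S σ δ) (a : Fin n → 𝔽) (m : FreeMonoid (Fin n)) :
    ∃ b : 𝔽, Decomposes S a (Finsupp.single m (1 : 𝔽)) b := by
  induction m using FreeMonoid.recOn with
  | one => exact ⟨1, 0, by simp [zero_mul', C]⟩
  | of_mul i m' ihm =>
    obtain ⟨b, G, hG⟩ := ihm
    refine ⟨∑ j : Fin n, σ b i j * a j + δ b i,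
      fun j => S.mul (X 𝔽 i) (G j) + C n (σ b i j), ?_⟩
    have h1 : Finsupp.single (FreeMonoid.of i * m') (1:𝔽) =
        S.mul (X 𝔽 i) (Finsupp.single m' 1) := (S.mono_mul_mono _ _).symm
    have h2 : ∀ j : Fin n, Finsupp.single (FreeMonoid.of j) (σ b i j) =
        S.mul (C n (σ b i j)) (X 𝔽 j - C n (a j)) + C n (σ b i j * a j) := by
      intro j
      rw [mul_sub', S.const_mul, S.const_mul, smul_C', single_eq_smul_single, X]
      abel
    have h3 : C n (∑ j : Fin n, σ b i j * a j) = ∑ j : Fin n, C n (σ b i j * a j) := by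
      classical
      induction (Finset.univ : Finset (Fin n)) using Finset.induction with
      | empty => simp [C_zero']
      | insert _ _ hx ih => rw [Finset.sum_insert hx, Finset.sum_insert hx, C_add', ih]
    rw [h1, hG, S.mul_add, mul_sum', hS i b]
    simp only [← S.mul_assoc]
    rw [Finset.sum_congr rfl (fun j _ => h2 j), Finset.sum_add_distrib]
    simp only [S.add_mul, Finset.sum_add_distrib, C_add', h3]
    abel

theorem exists_decomposes {σ : 𝔽 → Matrix (Fin n) (Fin n) 𝔽} {δ : 𝔽 → Fin n → 𝔽}
    (S : RawMul 𝔽 n) (hS : HasCommRule S σ δ) (a : Fin n → 𝔽) (F : SkewPoly 𝔽 n) :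
    ∃ b : 𝔽, Decomposes S a F b := by
  induction F using Finsupp.induction with
  | zero => exact ⟨0, decomposes_zero S a⟩
  | single_add m c f hm hc ih =>
    obtain ⟨b1, h1⟩ := decomposes_single S hS a m
    obtain ⟨b2, h2⟩ := ih
    exact ⟨c * b1 + b2, decomposes_add S (single_eq_smul_single m c ▸ decomposes_smul S c h1) h2⟩

theorem eval_eq_of_decomposes {σ : 𝔽 → Matrix (Fin n) (Fin n) 𝔽} {δ : 𝔽 → Fin n → 𝔽}
    (S : RawMul 𝔽 n) (hS : HasCommRule S σ δ) {a : Fin n → 𝔽} {F : SkewPoly 𝔽 n} {b : 𝔽}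
    (h : Decomposes S a F b) : eval S a F = b := by
  have hex : ∃ b : 𝔽, Decomposes S a F b := ⟨b, h⟩
  unfold eval
  rw [dif_pos hex]
  exact decomposes_unique S hex.choose_spec h

theorem eval_add {σ : 𝔽 → Matrix (Fin n) (Fin n) 𝔽} {δ : 𝔽 → Fin n → 𝔽}
    (S : RawMul 𝔽 n) (hS : HasCommRule S σ δ) (a : Fin n → 𝔽) (F G : SkewPoly 𝔽 n) :
    eval S a (F + G) = eval S a F + eval S a G := by
  obtain ⟨b1, h1⟩ := exists_decomposes S hS a F
  obtain ⟨b2, h2⟩ := exists_decomposes S hS a G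
  rw [eval_eq_of_decomposes S hS h1, eval_eq_of_decomposes S hS h2,
    eval_eq_of_decomposes S hS (decomposes_add S h1 h2)]

theorem eval_smul {σ : 𝔽 → Matrix (Fin n) (Fin n) 𝔽} {δ : 𝔽 → Fin n → 𝔽}
    (S : RawMul 𝔽 n) (hS : HasCommRule S σ δ) (a : Fin n → 𝔽) (c : 𝔽) (F : SkewPoly 𝔽 n) :
    eval S a (c • F) = c * eval S a F := by
  obtain ⟨b1, h1⟩ := exists_decomposes S hS a F
  rw [eval_eq_of_decomposes S hS h1, eval_eq_of_decomposes S hS (decomposes_smul S c h1)]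

theorem eval_zero {σ : 𝔽 → Matrix (Fin n) (Fin n) 𝔽} {δ : 𝔽 → Fin n → 𝔽}
    (S : RawMul 𝔽 n) (hS : HasCommRule S σ δ) (a : Fin n → 𝔽) :
    eval S a (0 : SkewPoly 𝔽 n) = 0 :=
  eval_eq_of_decomposes S hS (decomposes_zero S a)

end SkewPoly

namespace SkewPoly

variable {𝔽 : Type*} [DivisionRing 𝔽] {n : ℕ}

theorem eval_neg {σ : 𝔽 → Matrix (Fin n) (Fin n) 𝔽} {δ : 𝔽 → Fin n → 𝔽}
    (S : RawMul 𝔽 n) (hS : HasCommRule S σ δ) (a : Fin n → 𝔽) (F : SkewPoly 𝔽 n) :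
    eval S a (-F) = -eval S a F := by
  have h : eval S a (-F) + eval S a F = 0 := by
    rw [← eval_add S hS, neg_add_cancel, eval_zero S hS]
  exact eq_neg_of_add_eq_zero_left h

theorem eval_sub' {σ : 𝔽 → Matrix (Fin n) (Fin n) 𝔽} {δ : 𝔽 → Fin n → 𝔽}
    (S : RawMul 𝔽 n) (hS : HasCommRule S σ δ) (a : Fin n → 𝔽) (F G : SkewPoly 𝔽 n) :
    eval S a (F - G) = eval S a F - eval S a G := by
  rw [sub_eq_add_neg, eval_add S hS, eval_neg S hS, sub_eq_add_neg]

theorem eval_sum {σ : 𝔽 → Matrix (Fin n) (Fin n) 𝔽} {δ : 𝔽 → Fin n → 𝔽}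
    (S : RawMul 𝔽 n) (hS : HasCommRule S σ δ) (a : Fin n → 𝔽) {ι : Type*} (s : Finset ι)
    (g : ι → SkewPoly 𝔽 n) : eval S a (∑ i ∈ s, g i) = ∑ i ∈ s, eval S a (g i) := by
  classical
  induction s using Finset.induction with
  | empty => simp [eval_zero S hS]
  | insert _ _ hx ih => rw [Finset.sum_insert hx, Finset.sum_insert hx, eval_add S hS, ih]

/-- `I(Ω)` as a submodule. -/
def zSubmodule (σ : 𝔽 → Matrix (Fin n) (Fin n) 𝔽) (δ : 𝔽 → Fin n → 𝔽)
    (S : RawMul 𝔽 n) (hS : HasCommRule S σ δ) (Ω : Set (Fin n → 𝔽)) :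
    Submodule 𝔽 (SkewPoly 𝔽 n) where
  carrier := zeroIdeal S Ω
  add_mem' := fun {F G} hF hG a ha => by
    rw [eval_add S hS, hF a ha, hG a ha, add_zero]
  zero_mem' := fun a ha => eval_zero S hS a
  smul_mem' := fun c F hF a ha => by
    rw [eval_smul S hS, hF a ha, mul_zero]

theorem mem_span_zeroIdeal (σ : 𝔽 → Matrix (Fin n) (Fin n) 𝔽) (δ : 𝔽 → Fin n → 𝔽)
    (S : RawMul 𝔽 n) (hS : HasCommRule S σ δ) (Ω : Set (Fin n → 𝔽)) (H : SkewPoly 𝔽 n) :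
    H ∈ Submodule.span 𝔽 (zeroIdeal S Ω) ↔ ∀ a ∈ Ω, eval S a H = 0 := by
  have h1 : zeroIdeal S Ω = ↑(zSubmodule σ δ S hS Ω) := rfl
  rw [h1, Submodule.span_eq]
  exact Iff.rfl

theorem subset_pClosure (S : RawMul 𝔽 n) (Ω : Set (Fin n → 𝔽)) : Ω ⊆ pClosure S Ω :=
  fun _ ha F hF => hF _ ha

theorem pClosure_subset_pClosure (S : RawMul 𝔽 n) {A B : Set (Fin n → 𝔽)}
    (h : A ⊆ pClosure S B) : pClosure S A ⊆ pClosure S B := by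
  intro x hx F hF
  exact hx F (fun a ha => h ha F hF)

end SkewPoly

namespace SkewPoly

variable {𝔽 : Type*} [DivisionRing 𝔽] {n : ℕ}

theorem main_thm {σ : 𝔽 → Matrix (Fin n) (Fin n) 𝔽} {δ : 𝔽 → Fin n → 𝔽}
    (S : RawMul 𝔽 n) (hS : HasCommRule S σ δ)
    (Ω : Set (Fin n → 𝔽)) (M : ℕ) (b : Fin M → (Fin n → 𝔽)) (hbinj : Function.Injective b)
    (hB : IsPBasis S (Set.range b) Ω) (F : Fin M → SkewPoly 𝔽 n)
    (hdual : ∀ i j : Fin M, eval S (b j) (F i) = if i = j then 1 else 0) :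
    LinearIndependent 𝔽 F ∧
    LinearIndependent 𝔽 (fun i : Fin M =>
      Submodule.Quotient.mk (p := Submodule.span 𝔽 (zeroIdeal S Ω)) (F i)) ∧
    Submodule.span 𝔽 (Set.range fun i : Fin M =>
      Submodule.Quotient.mk (p := Submodule.span 𝔽 (zeroIdeal S Ω)) (F i)) = ⊤ ∧
    Module.rank 𝔽 (SkewPoly 𝔽 n ⧸ Submodule.span 𝔽 (zeroIdeal S Ω)) = (M : Cardinal) ∧
    pRank S Ω = M := by
  classical
  set Z := Submodule.span 𝔽 (zeroIdeal S Ω) with hZ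
  have hmk : ∀ x : SkewPoly 𝔽 n, Submodule.Quotient.mk (p := Z) x = Z.mkQ x := fun _ => rfl
  have hbΩ : ∀ j, b j ∈ Ω := fun j => hB.1 (Set.mem_range_self j)
  have hli : LinearIndependent 𝔽 (fun i : Fin M => Submodule.Quotient.mk (p := Z) (F i)) := by
    rw [Fintype.linearIndependent_iff]
    intro g hg j
    have h1 : Z.mkQ (∑ i : Fin M, g i • F i) = 0 := by
      rw [map_sum]
      simp only [_root_.map_smul]
      exact hg
    have h2 : (∑ i : Fin M, g i • F i) ∈ Z := by
      rwa [← Submodule.Quotient.mk_eq_zero Z]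
    have h3 := (mem_span_zeroIdeal σ δ S hS Ω _).mp h2 (b j) (hbΩ j)
    rw [eval_sum S hS] at h3
    have h4 : ∀ i, eval S (b j) (g i • F i) = g i * (if i = j then 1 else 0) := by
      intro i; rw [eval_smul S hS, hdual i j]
    rw [Finset.sum_congr rfl (fun i _ => h4 i)] at h3
    simpa [mul_ite, Finset.sum_ite_eq'] using h3
  have hFli : LinearIndependent 𝔽 F := LinearIndependent.of_comp Z.mkQ hli
  have hspan : Submodule.span 𝔽 (Set.range fun i : Fin M =>
      Submodule.Quotient.mk (p := Z) (F i)) = ⊤ := by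
    rw [eq_top_iff]
    rintro q -
    obtain ⟨H, rfl⟩ := Submodule.mkQ_surjective Z q
    have hsub : H - ∑ i : Fin M, eval S (b i) H • F i ∈ Z := by
      rw [mem_span_zeroIdeal σ δ S hS]
      intro a ha
      have hz : ∀ j, eval S (b j) (H - ∑ i : Fin M, eval S (b i) H • F i) = 0 := by
        intro j
        rw [eval_sub' S hS, eval_sum S hS]
        have h4 : ∀ i, eval S (b j) (eval S (b i) H • F i)
            = eval S (b i) H * (if i = j then 1 else 0) := by
          intro i; rw [eval_smul S hS, hdual i j]
        rw [Finset.sum_congr rfl (fun i _ => h4 i)]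
        simp [mul_ite, Finset.sum_ite_eq']
      have hmem : (H - ∑ i : Fin M, eval S (b i) H • F i) ∈ zeroIdeal S (Set.range b) := by
        rintro x ⟨j, rfl⟩; exact hz j
      have haΩ : a ∈ pClosure S (Set.range b) := by
        rw [hB.2.2]; exact ha
      exact haΩ _ hmem
    have h5 : Z.mkQ H - ∑ i : Fin M, eval S (b i) H • Z.mkQ (F i)
        = Z.mkQ (H - ∑ i : Fin M, eval S (b i) H • F i) := by
      rw [map_sub, map_sum]; simp only [_root_.map_smul]
    have h7 : Z.mkQ (H - ∑ i : Fin M, eval S (b i) H • F i) = 0 := by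
      rwa [Submodule.mkQ_apply, Submodule.Quotient.mk_eq_zero]
    have h6 : Z.mkQ H = ∑ i : Fin M, eval S (b i) H • Z.mkQ (F i) := by
      have := h5.trans h7
      exact sub_eq_zero.mp this
    rw [h6]
    refine Submodule.sum_mem _ fun i _ => Submodule.smul_mem _ _ (Submodule.subset_span ⟨i, rfl⟩)
  have hbasis : Module.Basis (Fin M) 𝔽 (SkewPoly 𝔽 n ⧸ Z) := Module.Basis.mk hli (le_of_eq hspan.symm)
  have hrank : Module.rank 𝔽 (SkewPoly 𝔽 n ⧸ Z) = (M : Cardinal) := by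
    rw [rank_eq_card_basis hbasis, Fintype.card_fin]
  have hmem : M ∈ {k : ℕ | ∃ B : Finset (Fin n → 𝔽), IsPBasis S ↑B Ω ∧ B.card = k} := by
    refine ⟨Finset.image b Finset.univ, ?_, ?_⟩
    · have h8 : (↑(Finset.image b Finset.univ) : Set (Fin n → 𝔽)) = Set.range b := by
        simp [Finset.coe_image]
      rw [h8]; exact hB
    · rw [Finset.card_image_of_injective _ hbinj, Finset.card_univ, Fintype.card_fin]
  have hlb : ∀ k ∈ {k : ℕ | ∃ B : Finset (Fin n → 𝔽), IsPBasis S ↑B Ω ∧ B.card = k},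
      M ≤ k := by
    rintro k ⟨B', hB', rfl⟩
    let Φ : SkewPoly 𝔽 n →ₗ[𝔽] ({x // x ∈ B'} → 𝔽) :=
      { toFun := fun H c => eval S ↑c H
        map_add' := fun H G => by funext c; exact eval_add S hS _ _ _
        map_smul' := fun c H => by funext x; exact eval_smul S hS _ _ _ }
    have hker : Z ≤ LinearMap.ker Φ := by
      intro H hH
      have h9 := (mem_span_zeroIdeal σ δ S hS Ω H).mp hH
      rw [LinearMap.mem_ker]
      funext c
      exact h9 ↑c (hB'.1 c.2)
    let φ := Z.liftQ Φ hker
    have hkerφ : LinearMap.ker φ = ⊥ := by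
      rw [eq_bot_iff]
      rintro q hq
      obtain ⟨H, rfl⟩ := Submodule.mkQ_surjective Z q
      have h1 : Φ H = 0 := hq
      have hzI : H ∈ zeroIdeal S (↑B' : Set (Fin n → 𝔽)) := by
        intro a ha
        exact congrFun h1 ⟨a, ha⟩
      have hHZ : H ∈ Z := by
        rw [mem_span_zeroIdeal σ δ S hS]
        intro a ha
        rw [← hB'.2.2] at ha
        exact ha _ hzI
      rw [Submodule.mem_bot, Submodule.mkQ_apply, Submodule.Quotient.mk_eq_zero]
      exact hHZ
    have hinj : Function.Injective φ := LinearMap.ker_eq_bot.mp hkerφ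
    have hle := LinearMap.rank_le_of_injective φ hinj
    rw [hrank, rank_fun', Fintype.card_coe] at hle
    exact_mod_cast hle
  have hpRank : pRank S Ω = M := le_antisymm (Nat.sInf_le hmem) (le_csInf ⟨M, hmem⟩ hlb)
  exact ⟨hFli, hli, hspan, hrank, hpRank⟩

end SkewPoly


/-- A dual P-basis `F₁, …, F_M` of a P-basis of a finitely generated
P-closed set `Ω` is left linearly independent, its image is a left `𝔽`-basis of
`R/I(Ω)`, and `dim R/I(Ω) = Rk(Ω)`; in particular if `𝔽ⁿ` is finitely generated then
the minimal skew polynomial ring `R/I(𝔽ⁿ)` has finite dimension `Rk(𝔽ⁿ)`. -/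
theorem stmt18 {𝔽 : Type*} [DivisionRing 𝔽] {n : ℕ} (hn : 0 < n)
    (σ : 𝔽 → Matrix (Fin n) (Fin n) 𝔽) (δ : 𝔽 → Fin n → 𝔽)
    (hσ : IsMatrixMorphism σ) (hδ : IsVectorDerivation σ δ)
    (S : RawMul 𝔽 n) (hS : HasCommRule S σ δ)
    (Ω : Set (Fin n → 𝔽)) (hΩ : IsPClosed S Ω) (hfg : FinGen S Ω)
    (M : ℕ) (b : Fin M → (Fin n → 𝔽)) (hbinj : Function.Injective b)
    (hB : IsPBasis S (Set.range b) Ω) (F : Fin M → SkewPoly 𝔽 n)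
    (hdual : ∀ i j : Fin M, eval S (b j) (F i) = if i = j then 1 else 0) :
    LinearIndependent 𝔽 F ∧
    LinearIndependent 𝔽 (fun i : Fin M =>
      Submodule.Quotient.mk (p := Submodule.span 𝔽 (zeroIdeal S Ω)) (F i)) ∧
    Submodule.span 𝔽 (Set.range fun i : Fin M =>
      Submodule.Quotient.mk (p := Submodule.span 𝔽 (zeroIdeal S Ω)) (F i)) = ⊤ ∧
    Module.rank 𝔽 (SkewPoly 𝔽 n ⧸ Submodule.span 𝔽 (zeroIdeal S Ω)) = (M : Cardinal) ∧
    pRank S Ω = M ∧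
    (FinGen S (Set.univ : Set (Fin n → 𝔽)) →
      Module.rank 𝔽
          (SkewPoly 𝔽 n ⧸ Submodule.span 𝔽 (zeroIdeal S (Set.univ : Set (Fin n → 𝔽)))) =
        (pRank S (Set.univ : Set (Fin n → 𝔽)) : Cardinal) ∧
      Module.rank 𝔽
          (SkewPoly 𝔽 n ⧸ Submodule.span 𝔽 (zeroIdeal S (Set.univ : Set (Fin n → 𝔽)))) <
        Cardinal.aleph0) := by
  classical
  obtain ⟨h1, h2, h3, h4, h5⟩ := main_thm S hS Ω M b hbinj hB F hdual
  refine ⟨h1, h2, h3, h4, h5, ?_⟩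
  intro hfg'
  obtain ⟨G0, hG0fin, -, hG0cl⟩ := hfg'
  set T : Set ℕ :=
    {k : ℕ | ∃ B : Finset (Fin n → 𝔽), pClosure S ↑B = Set.univ ∧ B.card = k} with hT
  have hne : T.Nonempty := by
    refine ⟨hG0fin.toFinset.card, hG0fin.toFinset, ?_, rfl⟩
    rw [Set.Finite.coe_toFinset]; exact hG0cl
  obtain ⟨B, hBcl, hBcard⟩ := Nat.sInf_mem hne
  have hPI : PIndep S (↑B : Set (Fin n → 𝔽)) := by
    intro a ha hcl
    have haB : a ∈ B := Finset.mem_coe.mp ha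
    have h1' : (↑B \ {a} : Set (Fin n → 𝔽)) = ↑(B.erase a) := by
      rw [Finset.coe_erase]
    have h2' : pClosure S ↑(B.erase a) = Set.univ := by
      apply Set.eq_univ_of_univ_subset
      rw [← hBcl]
      apply pClosure_subset_pClosure
      intro x hx
      by_cases hxa : x = a
      · subst hxa; rw [← h1']; exact hcl
      · refine subset_pClosure S _ ?_
        rw [← h1']; exact ⟨hx, hxa⟩
    have hle : sInf T ≤ (B.erase a).card := Nat.sInf_le ⟨B.erase a, h2', rfl⟩
    rw [Finset.card_erase_of_mem haB, hBcard] at hle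
    have hpos : 0 < B.card := Finset.card_pos.mpr ⟨a, haB⟩
    omega
  set M' := B.card with hM'
  set e := B.equivFin with he
  set b' : Fin M' → (Fin n → 𝔽) := fun i => ↑(e.symm i) with hb'
  have hbinj' : Function.Injective b' := fun i j hij => by
    have := e.symm.injective (Subtype.ext hij)
    exact this
  have hrange : Set.range b' = ↑B := by
    ext x
    constructor
    · rintro ⟨i, rfl⟩; exact (e.symm i).2
    · intro hx; exact ⟨e ⟨x, hx⟩, by simp [hb']⟩
  have hB' : IsPBasis S (Set.range b') Set.univ := by
    refine ⟨Set.subset_univ _, ?_, ?_⟩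
    · rw [hrange]; exact hPI
    · rw [hrange]; exact hBcl
  have hch : ∀ i : Fin M', ∃ G : SkewPoly 𝔽 n,
      G ∈ zeroIdeal S (Set.range b' \ {b' i}) ∧ eval S (b' i) G ≠ 0 := by
    intro i
    have hni := hB'.2.1 (b' i) (Set.mem_range_self i)
    by_contra hcon
    push_neg at hcon
    exact hni (fun Fq hFq => hcon Fq hFq)
  choose Gd hGd1 hGd2 using hch
  set F' : Fin M' → SkewPoly 𝔽 n := fun i => (eval S (b' i) (Gd i))⁻¹ • Gd i with hF'
  have hdual' : ∀ i j : Fin M', eval S (b' j) (F' i) = if i = j then 1 else 0 := by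
    intro i j
    rw [hF']
    simp only
    rw [eval_smul S hS]
    by_cases hij : i = j
    · subst hij; rw [if_pos rfl, inv_mul_cancel₀ (hGd2 i)]
    · rw [if_neg hij]
      have hbne : b' j ≠ b' i := fun h => hij (hbinj' h).symm
      have hz : eval S (b' j) (Gd i) = 0 := hGd1 i (b' j) ⟨Set.mem_range_self j, hbne⟩
      rw [hz, mul_zero]
  obtain ⟨-, -, -, h4', h5'⟩ := main_thm S hS Set.univ M' b' hbinj' hB' F' hdual'
  constructor
  · rw [h4', h5']
  · rw [h4']; exact Cardinal.nat_lt_aleph0 M'
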